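/- Let m > m*, where m* = (d-1)/4 if d is prime and m* = (d-1)/3 otherwise, and let Ω = ({-m,...,m} × Z_d) ∪ (Z_d × {-m,...,m}). If f, f̃ in C^d satisfy V_{f̃} f̃ = V_f f on Ω, then there exists γ with |γ| = 1 and f̃ = γf. -/

import Mathlib

open Complex Finset

noncomputable def chi (d : ℕ) (a : ZMod d) : ℂ :=
  Complex.exp (-(2 * (Real.pi : ℂ) * Complex.I * (a.val : ℂ)) / (d : ℂ))

noncomputable def zeta (d : ℕ) : ℂ := Complex.exp (-(2 * (Real.pi : ℂ) * Complex.I) / d)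

section basics
variable (d : ℕ) [NeZero d]

lemma chi_eq_zeta_pow (a : ZMod d) : chi d a = zeta d ^ a.val := by
  rw [zeta, ← Complex.exp_nat_mul, chi]
  congr 1
  ring

lemma zeta_pow_d : zeta d ^ d = 1 := by
  rw [zeta, ← Complex.exp_nat_mul]
  have hd : (d : ℂ) ≠ 0 := Nat.cast_ne_zero.2 (NeZero.ne d)
  have : (d:ℂ) * (-(2 * (Real.pi : ℂ) * Complex.I) / d) = -(2 * (Real.pi : ℂ) * Complex.I) := by
    field_simp
  rw [this, Complex.exp_neg, Complex.exp_two_pi_mul_I, inv_one]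

lemma zeta_prim : IsPrimitiveRoot (zeta d) d := by
  have h := (Complex.isPrimitiveRoot_exp d (NeZero.ne d)).inv
  have : zeta d = (Complex.exp (2 * Real.pi * Complex.I / d))⁻¹ := by
    rw [← Complex.exp_neg, zeta, neg_div]
  rwa [this]

lemma zeta_pow_mod (x : ℕ) : zeta d ^ (x % d) = zeta d ^ x := by
  conv_rhs => rw [← Nat.div_add_mod x d]
  rw [pow_add, pow_mul, zeta_pow_d, one_pow, one_mul]

lemma chi_natCast (x : ℕ) : chi d (x : ZMod d) = zeta d ^ x := by
  rw [chi_eq_zeta_pow, ZMod.val_natCast, zeta_pow_mod]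

lemma chi_add (a b : ZMod d) : chi d (a + b) = chi d a * chi d b := by
  have ha : ((a.val : ℕ) : ZMod d) = a := ZMod.natCast_rightInverse a
  have hb : ((b.val : ℕ) : ZMod d) = b := ZMod.natCast_rightInverse b
  have h : a + b = ((a.val + b.val : ℕ) : ZMod d) := by rw [Nat.cast_add, ha, hb]
  rw [h, chi_natCast, pow_add, chi_eq_zeta_pow d a, chi_eq_zeta_pow d b]

lemma chi_zero : chi d 0 = 1 := by
  have : ((0:ℕ) : ZMod d) = (0 : ZMod d) := Nat.cast_zero
  rw [← this, chi_natCast, pow_zero]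

lemma chi_neg_mul (a : ZMod d) : chi d (-a) * chi d a = 1 := by
  rw [← chi_add, neg_add_cancel, chi_zero]

lemma chi_ne_zero (a : ZMod d) : chi d a ≠ 0 := by
  rw [chi]; exact Complex.exp_ne_zero _

lemma conj_zeta : (starRingEnd ℂ) (zeta d) = (zeta d)⁻¹ := by
  rw [zeta, ← Complex.exp_conj, ← Complex.exp_neg]
  congr 1
  simp [map_div₀, map_neg, map_mul, Complex.conj_I, Complex.conj_ofReal]
  rw [show ((starRingEnd ℂ) 2) = 2 from Complex.conj_ofNat 2]
  ring

lemma conj_chi (a : ZMod d) : (starRingEnd ℂ) (chi d a) = chi d (-a) := by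
  have h1 : (starRingEnd ℂ) (chi d a) * chi d a = 1 := by
    rw [chi_eq_zeta_pow, map_pow, conj_zeta, inv_pow, inv_mul_cancel₀]
    exact pow_ne_zero _ (by rw [zeta]; exact Complex.exp_ne_zero _)
  have h2 := chi_neg_mul d a
  rw [eq_inv_of_mul_eq_one_left h1, eq_inv_of_mul_eq_one_left h2]

lemma sum_chi (c : ZMod d) : ∑ j : ZMod d, chi d (j * c) = if c = 0 then (d:ℂ) else 0 := by
  split_ifs with hc
  · subst hc
    simp only [mul_zero, chi_zero]
    rw [Finset.sum_const, Finset.card_univ, ZMod.card]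
    simp
  · have key : ∀ j : ZMod d, chi d (j * c) = (zeta d ^ c.val) ^ j.val := by
      intro j
      rw [chi_eq_zeta_pow, ZMod.val_mul, zeta_pow_mod, mul_comm (j.val), pow_mul]
    simp only [key]
    rw [Finset.sum_nbij' (i := fun (j : ZMod d) => j.val) (j := fun (i : ℕ) => (i : ZMod d))
      (t := Finset.range d) (g := fun i => (zeta d ^ c.val) ^ i)]
    · have hw : zeta d ^ c.val ≠ 1 := by
        apply (zeta_prim d).pow_ne_one_of_pos_of_lt
        · exact ((ZMod.val_pos).2 hc).ne'
        · exact ZMod.val_lt c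
      rw [geom_sum_eq hw]
      rw [← pow_mul, mul_comm, pow_mul, zeta_pow_d, one_pow, sub_self, zero_div]
    · intro a _; exact Finset.mem_range.2 (ZMod.val_lt a)
    · intro a ha; exact Finset.mem_univ _
    · intro a _; exact ZMod.natCast_rightInverse a
    · intro a ha; exact ZMod.val_cast_of_lt (Finset.mem_range.1 ha)
    · intro a _; rfl

end basics


noncomputable def stft (d : ℕ) [NeZero d] (g f : ZMod d → ℂ) (k l : ZMod d) : ℂ :=
  ∑ j : ZMod d, f j * (starRingEnd ℂ) (g (j - k)) * chi d (j * l)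

noncomputable def dft (d : ℕ) [NeZero d] (f : ZMod d → ℂ) (l : ZMod d) : ℂ :=
  ∑ j : ZMod d, f j * chi d (j * l)

noncomputable def ft2 (d : ℕ) [NeZero d] (F : ZMod d → ZMod d → ℂ) (a b : ZMod d) : ℂ :=
  ∑ k : ZMod d, ∑ l : ZMod d, F k l * chi d (a * k + b * l)

section dftsec
variable (d : ℕ) [NeZero d]

lemma chi_sub_mul (a b c : ZMod d) : chi d (a * c) * (starRingEnd ℂ) (chi d (b * c)) = chi d ((a - b) * c) := by
  rw [conj_chi, ← chi_add]
  congr 1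
  ring

lemma dft_inversion (f : ZMod d → ℂ) (j : ZMod d) :
    ∑ l : ZMod d, dft d f l * (starRingEnd ℂ) (chi d (j * l)) = (d : ℂ) * f j := by
  unfold dft
  simp only [Finset.sum_mul]
  rw [Finset.sum_comm]
  have h1 : ∀ j' l : ZMod d, f j' * chi d (j' * l) * (starRingEnd ℂ) (chi d (j * l))
      = f j' * chi d (l * (j' - j)) := by
    intro j' l
    rw [mul_assoc, chi_sub_mul, mul_comm (j' - j) l]
  simp only [h1, ← Finset.mul_sum, sum_chi]
  rw [Finset.sum_eq_single_of_mem j (Finset.mem_univ j)]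
  · simp [mul_comm]
  · intro b _ hb
    rw [if_neg (fun h => hb (sub_eq_zero.1 h)), mul_zero]

lemma eq_of_dft_eq (f g : ZMod d → ℂ) (h : ∀ l, dft d f l = dft d g l) : f = g := by
  funext j
  have h2 : (d:ℂ) * f j = (d:ℂ) * g j := by
    rw [← dft_inversion, ← dft_inversion]
    exact Finset.sum_congr rfl (fun l _ => by rw [h])
  exact mul_left_cancel₀ (Nat.cast_ne_zero.2 (NeZero.ne d)) h2

lemma dft_smul (γ : ℂ) (f : ZMod d → ℂ) (l : ZMod d) :
    dft d (fun j => γ * f j) l = γ * dft d f l := by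
  unfold dft
  rw [Finset.mul_sum]
  exact Finset.sum_congr rfl (fun j _ => by ring)

lemma stft_eq_dft (f : ZMod d → ℂ) (k l : ZMod d) :
    stft d f f k l = dft d (fun j => f j * (starRingEnd ℂ) (f (j - k))) l := rfl

lemma stft_freq (f : ZMod d → ℂ) (l a : ZMod d) :
    ∑ k : ZMod d, stft d f f k l * chi d (k * a)
      = dft d f (l + a) * (starRingEnd ℂ) (dft d f a) := by
  unfold stft dft
  simp only [Finset.sum_mul]
  rw [Finset.sum_comm]
  have key : ∀ j : ZMod d,
      ∑ k : ZMod d, f j * (starRingEnd ℂ) (f (j - k)) * chi d (j * l) * chi d (k * a)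
        = ∑ n : ZMod d, (f j * chi d (j * (l + a))) * (starRingEnd ℂ) (f n * chi d (n * a)) := by
    intro j
    apply Fintype.sum_equiv (Equiv.subLeft j)
    intro n
    simp only [Equiv.subLeft_apply, sub_sub_cancel]
    have hs : chi d (j * (l + a)) * (starRingEnd ℂ) (chi d ((j - n) * a))
        = chi d (j * l) * chi d (n * a) := by
      rw [conj_chi, ← chi_add, ← chi_add]
      congr 1
      ring
    rw [map_mul]
    linear_combination (-(f j * (starRingEnd ℂ) (f (j - n)))) * hs
  simp only [key]
  rw [map_sum]
  simp only [Finset.mul_sum]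

end dftsec

def Pprop (d m : ℕ) [NeZero d] (g g' : ZMod d → ℂ) : Prop :=
  ∀ c : ℤ, |c| ≤ (m:ℤ) → ∀ p : ZMod d,
    g' p * (starRingEnd ℂ) (g' (p - (c : ZMod d))) = g p * (starRingEnd ℂ) (g (p - (c : ZMod d)))

def Recov (d m : ℕ) [NeZero d] (g : ZMod d → ℂ) : Prop :=
  ∃ t₀ : ZMod d, g t₀ ≠ 0 ∧ ∀ i : ℕ, 1 ≤ i →
    (∀ r : ℕ, r < m → g (t₀ + ((i + r : ℕ) : ZMod d)) = 0) →
    ∀ j : ℕ, i + m ≤ j → j ≤ d - 1 → g (t₀ + (j : ZMod d)) = 0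

section comb
variable {d m : ℕ} [NeZero d] {g g' : ZMod d → ℂ}

lemma pprop_self (hP : Pprop d m g g') (p : ZMod d) :
    g' p * (starRingEnd ℂ) (g' p) = g p * (starRingEnd ℂ) (g p) := by
  have := hP 0 (by simp) p
  simpa using this

lemma pprop_abs (hP : Pprop d m g g') (p : ZMod d) :
    ‖g' p‖ = ‖g p‖ := by
  have h := pprop_self hP p
  rw [Complex.mul_conj, Complex.mul_conj] at h
  have h2 : Complex.normSq (g' p) = Complex.normSq (g p) := by exact_mod_cast h
  rw [Complex.norm_def, Complex.norm_def, h2]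

lemma pprop_zero_iff (hP : Pprop d m g g') (p : ZMod d) : g' p = 0 ↔ g p = 0 := by
  rw [← norm_eq_zero (a := g' p), ← norm_eq_zero (a := g p), pprop_abs hP]

lemma pprop_edge (hP : Pprop d m g g') (q : ZMod d) (c : ℕ) (hc1 : 1 ≤ c) (hcm : c ≤ m) :
    g' (q + (c : ZMod d)) * (starRingEnd ℂ) (g' q) = g (q + (c : ZMod d)) * (starRingEnd ℂ) (g q) := by
  have habs : |(c:ℤ)| ≤ (m:ℤ) := by
    rw [Int.abs_natCast]
    exact_mod_cast hcm
  have h := hP (c : ℤ) habs (q + (c : ZMod d))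
  have he : (q + (c : ZMod d)) - (((c:ℤ) : ZMod d)) = q := by push_cast; ring
  rwa [he] at h

lemma lin_lemma (hP : Pprop d m g g') (t₀ : ZMod d) (h0 : g t₀ ≠ 0)
    (hH : ∀ i : ℕ, 1 ≤ i → (∀ r : ℕ, r < m → g (t₀ + ((i + r : ℕ) : ZMod d)) = 0) →
      ∀ j : ℕ, i + m ≤ j → j ≤ d - 1 → g (t₀ + (j : ZMod d)) = 0) :
    ∀ j : ℕ, j ≤ d - 1 → g (t₀ + (j : ZMod d)) ≠ 0 →
      g' (t₀ + (j : ZMod d)) * g t₀ = g' t₀ * g (t₀ + (j : ZMod d)) := by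
  intro j
  induction j using Nat.strong_induction_on with
  | _ j IH =>
    intro hjd hgj
    classical
    rcases Nat.eq_zero_or_pos j with hj0 | hj1
    · subst hj0; simp
    · have hP0 : g (t₀ + ((0:ℕ) : ZMod d)) ≠ 0 := by simpa using h0
      set j' := Nat.findGreatest (fun i => g (t₀ + (i : ZMod d)) ≠ 0) (j - 1) with hj'def
      have hPj' : g (t₀ + ((Nat.findGreatest (fun i => g (t₀ + (i : ZMod d)) ≠ 0) (j - 1) : ℕ) : ZMod d)) ≠ 0 :=
        Nat.findGreatest_spec (P := fun i => g (t₀ + (i : ZMod d)) ≠ 0) (Nat.zero_le _) hP0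
      rw [← hj'def] at hPj' 
      have hj'le : j' ≤ j - 1 := Nat.findGreatest_le _
      have hj'lt : j' < j := lt_of_le_of_lt hj'le (Nat.sub_lt hj1 one_pos)
      have hzero : ∀ k, j' < k → k ≤ j - 1 → g (t₀ + (k : ZMod d)) = 0 := by
        intro k h1 h2
        have hnk := Nat.findGreatest_is_greatest (k := k) (hj'def ▸ h1) h2
        exact not_not.1 hnk
      by_cases hc : j - j' ≤ m
      · -- edge case
        have hc1 : 1 ≤ j - j' := by omega
        have hq : (t₀ + (j' : ZMod d)) + ((j - j' : ℕ) : ZMod d) = t₀ + (j : ZMod d) := by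
          have h5 : ((j' : ℕ) : ZMod d) + ((j - j' : ℕ) : ZMod d) = ((j : ℕ) : ZMod d) := by
            rw [← Nat.cast_add]
            congr 1
            omega
          rw [add_assoc, h5]
        have E := pprop_edge hP (t₀ + (j' : ZMod d)) (j - j') hc1 hc
        rw [hq] at E
        have I2 := IH j' hj'lt (le_trans hj'le (by omega)) hPj'
        have hu : g (t₀ + (j' : ZMod d)) ≠ 0 := hPj'
        have hu' : g' (t₀ + (j' : ZMod d)) ≠ 0 :=
          fun h => hu ((pprop_zero_iff hP _).1 h)
        have Labs := pprop_self hP (t₀ + (j' : ZMod d))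
        have hcu' : (starRingEnd ℂ) (g' (t₀ + (j' : ZMod d))) ≠ 0 :=
          fun h => hu' ((map_eq_zero (starRingEnd ℂ)).1 h)
        have key : g' (t₀ + (j : ZMod d)) * g t₀ *
            (g (t₀ + (j' : ZMod d)) * (starRingEnd ℂ) (g' (t₀ + (j' : ZMod d)))) =
            g' t₀ * g (t₀ + (j : ZMod d)) *
            (g (t₀ + (j' : ZMod d)) * (starRingEnd ℂ) (g' (t₀ + (j' : ZMod d)))) := by
          linear_combination (g t₀ * g (t₀ + (j' : ZMod d))) * E +
            (g (t₀ + (j : ZMod d)) * (starRingEnd ℂ) (g' (t₀ + (j' : ZMod d)))) * I2 -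
            (g (t₀ + (j : ZMod d)) * g t₀) * Labs
        exact mul_right_cancel₀ (mul_ne_zero hu hcu') key
      · -- gap case: contradiction
        exfalso
        apply hgj
        apply hH (j' + 1) (by omega)
        · intro r hr
          apply hzero (j' + 1 + r) (by omega) (by omega)
        · omega
        · exact hjd

lemma rec_recover (hP : Pprop d m g g') (hR : Recov d m g) :
    ∃ γ : ℂ, ‖γ‖ = 1 ∧ g' = fun p => γ * g p := by
  obtain ⟨t₀, h0, hH⟩ := hR
  refine ⟨g' t₀ / g t₀, ?_, ?_⟩
  · rw [norm_div, pprop_abs hP, div_self]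
    simpa using h0
  · funext p
    by_cases hp : g p = 0
    · rw [(pprop_zero_iff hP p).2 hp, hp, mul_zero]
    · have hri := ZMod.natCast_rightInverse (n := d) (p - t₀)
      have hj : t₀ + (((p - t₀).val : ℕ) : ZMod d) = p := by
        rw [hri]; ring
      have hjd : (p - t₀).val ≤ d - 1 := by
        have h6 := ZMod.val_lt (p - t₀)
        omega
      have hcross := lin_lemma hP t₀ h0 hH (p - t₀).val hjd (by rw [hj]; exact hp)
      rw [hj] at hcross
      field_simp [h0]
      linear_combination hcross

lemma run_of_not_rec (h0 : g ≠ 0) (hnR : ¬ Recov d m g) :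
    ∃ t : ZMod d, ∀ r : ℕ, r < m → g (t + (r : ZMod d)) = 0 := by
  have ⟨p₀, hp₀⟩ : ∃ p, g p ≠ 0 := Function.ne_iff.1 h0
  rw [Recov] at hnR
  push_neg at hnR
  obtain ⟨i₁, hi₁, hrun, -⟩ := hnR p₀ hp₀
  refine ⟨p₀ + (i₁ : ZMod d), fun r hr => ?_⟩
  have := hrun r hr
  rwa [Nat.cast_add, ← add_assoc] at this

lemma zeros_of_not_rec (hm : 1 ≤ m) (h0 : g ≠ 0) (hnR : ¬ Recov d m g) :
    ∃ Z : Finset (ZMod d), 2 * m ≤ Z.card ∧ ∀ x ∈ Z, g x = 0 := by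
  classical
  have ⟨p₀, hp₀⟩ : ∃ p, g p ≠ 0 := Function.ne_iff.1 h0
  rw [Recov] at hnR
  push_neg at hnR
  obtain ⟨i₁, hi₁, hrun₁, j₁, hj₁m, hj₁d, hj₁⟩ := hnR p₀ hp₀
  have hex : ∃ j, i₁ ≤ j ∧ g (p₀ + (j : ZMod d)) ≠ 0 := ⟨j₁, by omega, hj₁⟩
  obtain ⟨hjm1, hjm2⟩ := Nat.find_spec hex
  set jmin := Nat.find hex with hjmdef
  have hjminle : jmin ≤ j₁ := Nat.find_min' hex ⟨by omega, hj₁⟩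
  have hmid : ∀ k, i₁ ≤ k → k < jmin → g (p₀ + (k : ZMod d)) = 0 := by
    intro k h1 h2
    by_contra hk
    exact absurd ⟨h1, hk⟩ (Nat.find_min hex h2)
  have hjmge : i₁ + m ≤ jmin := by
    by_contra hlt
    push_neg at hlt
    have hr : jmin - i₁ < m := by omega
    have h7 := hrun₁ (jmin - i₁) hr
    rw [show i₁ + (jmin - i₁) = jmin by omega] at h7
    exact hjm2 h7
  set ℓ := jmin - i₁ with hldef
  have hlm : m ≤ ℓ := by omega
  set t₀ : ZMod d := p₀ + (jmin : ZMod d) with ht₀def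
  obtain ⟨i₂, hi₂, hrun₂, j₂, hj₂m, hj₂d, hj₂⟩ := hnR t₀ hjm2
  have hd1 : 1 ≤ d := Nat.one_le_iff_ne_zero.2 (NeZero.ne d)
  have hld : ℓ < d := by omega
  have hj₂lt : j₂ < d - ℓ := by
    by_contra hge
    push_neg at hge
    apply hj₂
    have hcast : t₀ + (j₂ : ZMod d) = p₀ + ((i₁ + (j₂ - (d - ℓ)) : ℕ) : ZMod d) := by
      rw [ht₀def, add_assoc, ← Nat.cast_add]
      have h8 : ((jmin + j₂ : ℕ) : ZMod d) = ((i₁ + (j₂ - (d - ℓ)) + d : ℕ) : ZMod d) := by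
        congr 1
        omega
      rw [h8, Nat.cast_add, ZMod.natCast_self, add_zero]
    rw [hcast]
    exact hmid (i₁ + (j₂ - (d - ℓ))) (by omega) (by omega)
  -- build zero set
  set A : Finset ℕ := Finset.Ico i₂ (i₂ + m) with hAdef
  set B : Finset ℕ := Finset.Ico (d - ℓ) d with hBdef
  have hdisj : Disjoint A B := by
    rw [Finset.disjoint_left]
    intro x hx1 hx2
    rw [hAdef, Finset.mem_Ico] at hx1
    rw [hBdef, Finset.mem_Ico] at hx2
    omega
  refine ⟨(A ∪ B).image (fun x : ℕ => t₀ + (x : ZMod d)), ?_, ?_⟩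
  · rw [Finset.card_image_of_injOn]
    · rw [Finset.card_union_of_disjoint hdisj, hAdef, hBdef, Nat.card_Ico, Nat.card_Ico]
      omega
    · intro x hx y hy hxy
      have hxd : x < d := by
        rcases Finset.mem_union.1 hx with h | h <;>
          [rw [hAdef, Finset.mem_Ico] at h; rw [hBdef, Finset.mem_Ico] at h] <;> omega
      have hyd : y < d := by
        rcases Finset.mem_union.1 hy with h | h <;>
          [rw [hAdef, Finset.mem_Ico] at h; rw [hBdef, Finset.mem_Ico] at h] <;> omega
      have : ((x:ℕ) : ZMod d) = ((y:ℕ) : ZMod d) := by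
        have := add_left_cancel hxy
        exact this
      have hv : x % d = y % d := by
        have h9 : (((x:ℕ) : ZMod d)).val = (((y:ℕ) : ZMod d)).val := by rw [this]
        rwa [ZMod.val_natCast, ZMod.val_natCast] at h9
      rw [Nat.mod_eq_of_lt hxd, Nat.mod_eq_of_lt hyd] at hv
      exact hv
  · intro z hz
    obtain ⟨x, hx, rfl⟩ := Finset.mem_image.1 hz
    rcases Finset.mem_union.1 hx with h | h
    · rw [hAdef, Finset.mem_Ico] at h
      have h10 := hrun₂ (x - i₂) (by omega)
      rwa [show i₂ + (x - i₂) = x by omega] at h10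
    · rw [hBdef, Finset.mem_Ico] at h
      have hcast : t₀ + (x : ZMod d) = p₀ + ((i₁ + (x - (d - ℓ)) : ℕ) : ZMod d) := by
        rw [ht₀def, add_assoc, ← Nat.cast_add]
        have h8 : ((jmin + x : ℕ) : ZMod d) = ((i₁ + (x - (d - ℓ)) + d : ℕ) : ZMod d) := by
          congr 1
          omega
        rw [h8, Nat.cast_add, ZMod.natCast_self, add_zero]
      rw [hcast]
      exact hmid (i₁ + (x - (d - ℓ))) (by omega) (by omega)

end comb

section vand

lemma vec_zero_of_det {s : ℕ} (M : Matrix (Fin s) (Fin s) ℂ) (hdet : M.det ≠ 0)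
    (c : Fin s → ℂ) (h : ∀ i, ∑ j, M i j * c j = 0) : ∀ j, c j = 0 := by
  have hv : M.mulVec c = 0 := funext fun i => h i
  intro j
  have := Matrix.eq_zero_of_mulVec_eq_zero hdet hv
  rw [this]
  rfl

lemma det_shift_vand {s : ℕ} (y : Fin s → ℂ) (hy : Function.Injective y)
    (h0 : ∀ j, y j ≠ 0) (e : ℕ) :
    (Matrix.of fun i j : Fin s => y j ^ (e + (i:ℕ))).det ≠ 0 := by
  have hM : (Matrix.of fun i j : Fin s => y j ^ (e + (i:ℕ)))
      = (Matrix.diagonal (fun j => y j ^ e) * Matrix.vandermonde y).transpose := by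
    ext i j
    simp [Matrix.diagonal_mul, Matrix.vandermonde, pow_add]
  rw [hM, Matrix.det_transpose, Matrix.det_mul, Matrix.det_diagonal, Matrix.det_vandermonde]
  apply mul_ne_zero
  · exact Finset.prod_ne_zero_iff.2 fun j _ => pow_ne_zero _ (h0 j)
  · refine Finset.prod_ne_zero_iff.2 fun i _ => Finset.prod_ne_zero_iff.2 fun j hj => ?_
    rw [Finset.mem_Ioi] at hj
    exact sub_ne_zero.2 fun hh => (ne_of_gt hj) (hy hh)

end vand

namespace Cheb
open MvPolynomial Polynomial

variable {s : ℕ}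

noncomputable def subst (i j : Fin s) : MvPolynomial (Fin s) ℤ →ₐ[ℤ] MvPolynomial (Fin s) ℤ :=
  MvPolynomial.aeval (fun k => if k = i then MvPolynomial.X j else MvPolynomial.X k)

lemma subst_X_self (i j : Fin s) : subst i j (MvPolynomial.X i) = MvPolynomial.X j := by
  simp [subst]

lemma subst_X_other (i j k : Fin s) (h : k ≠ i) : subst i j (MvPolynomial.X k) = MvPolynomial.X k := by
  simp [subst, h]

lemma subst_dvd_sub (i j : Fin s) (f : MvPolynomial (Fin s) ℤ) :
    (MvPolynomial.X i - MvPolynomial.X j) ∣ (f - subst i j f) := by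
  induction f using MvPolynomial.induction_on with
  | C a => simp [subst]
  | add p q hp hq =>
    have h : p + q - subst i j (p + q) = (p - subst i j p) + (q - subst i j q) := by
      rw [map_add]; ring
    rw [h]
    exact dvd_add hp hq
  | mul_X p k hp =>
    rw [map_mul]
    by_cases hk : k = i
    · subst hk
      rw [subst_X_self]
      have h : p * MvPolynomial.X k - subst k j p * MvPolynomial.X j
          = (p - subst k j p) * MvPolynomial.X k + subst k j p * (MvPolynomial.X k - MvPolynomial.X j) := by
        ring
      rw [h]
      exact dvd_add (hp.mul_right _) (Dvd.dvd.mul_left dvd_rfl _)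
    · rw [subst_X_other i j k hk]
      have h : p * MvPolynomial.X k - subst i j p * MvPolynomial.X k
          = (p - subst i j p) * MvPolynomial.X k := by ring
      rw [h]
      exact hp.mul_right _
    
lemma dvd_iff_subst (i j : Fin s) (hij : i ≠ j) (f : MvPolynomial (Fin s) ℤ) :
    (MvPolynomial.X i - MvPolynomial.X j) ∣ f ↔ subst i j f = 0 := by
  constructor
  · rintro ⟨g, rfl⟩
    rw [map_mul, map_sub, subst_X_self, subst_X_other i j j (Ne.symm hij), sub_self, zero_mul]
  · intro h
    have := subst_dvd_sub i j f
    rwa [h, sub_zero] at this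

lemma X_sub_X_ne (a b : Fin s) (h : a ≠ b) :
    (MvPolynomial.X a - MvPolynomial.X b : MvPolynomial (Fin s) ℤ) ≠ 0 :=
  sub_ne_zero.2 fun hh => h (MvPolynomial.X_injective hh)

lemma prod_dvd (t : Finset (Fin s × Fin s)) (hord : ∀ q ∈ t, q.1 < q.2) :
    ∀ f : MvPolynomial (Fin s) ℤ, (∀ q ∈ t, subst q.2 q.1 f = 0) →
    (∏ q ∈ t, (MvPolynomial.X q.2 - MvPolynomial.X q.1)) ∣ f := by
  classical
  induction t using Finset.induction_on with
  | empty => intro f _; simp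
  | insert q t hq ih =>
    intro f hf
    have hqlt : q.1 < q.2 := hord q (Finset.mem_insert_self q t)
    have h1 : subst q.2 q.1 f = 0 := hf q (Finset.mem_insert_self q t)
    obtain ⟨g, rfl⟩ := (dvd_iff_subst q.2 q.1 (ne_of_gt hqlt) f).2 h1
    have hg : ∀ q' ∈ t, subst q'.2 q'.1 g = 0 := by
      intro q' hq'
      have hq'lt : q'.1 < q'.2 := hord q' (Finset.mem_insert_of_mem hq')
      have h2 := hf q' (Finset.mem_insert_of_mem hq')
      rw [map_mul] at h2
      have h3 : subst q'.2 q'.1 (MvPolynomial.X q.2 - MvPolynomial.X q.1) ≠ 0 := by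
        rw [map_sub]
        by_cases h21 : q.2 = q'.2
        · rw [h21, subst_X_self]
          by_cases h11 : q.1 = q'.2
          · exfalso; exact absurd (h11 ▸ h21 ▸ hqlt) (lt_irrefl _)
          · rw [subst_X_other _ _ _ h11]
            apply X_sub_X_ne
            intro hc
            apply hq
            have : q = q' := Prod.ext (hc ▸ rfl) h21
            rwa [this]
        · rw [subst_X_other _ _ _ h21]
          by_cases h11 : q.1 = q'.2
          · rw [h11, subst_X_self]
            apply X_sub_X_ne
            intro hc
            have h4 : q'.1 < q.1 := by rw [h11]; exact hq'lt
            have h5 : q.1 < q'.1 := by rw [← hc]; exact hqlt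
            exact lt_asymm h4 h5
          · rw [subst_X_other _ _ _ h11]
            exact X_sub_X_ne _ _ (ne_of_gt hqlt)
      exact (mul_eq_zero.1 h2).resolve_left h3
    rw [Finset.prod_insert hq]
    exact mul_dvd_mul_left _ (ih (fun q' hq' => hord q' (Finset.mem_insert_of_mem hq')) g hg)

end Cheb

namespace Cheb2
open MvPolynomial Polynomial Cheb

noncomputable def pairs (s : ℕ) : Finset (Fin s × Fin s) :=
  Finset.univ.filter (fun q => q.1 < q.2)

lemma mem_pairs {s : ℕ} (q : Fin s × Fin s) : q ∈ pairs s ↔ q.1 < q.2 := by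
  simp [pairs]

lemma prod_pairs_eq {α : Type*} [CommMonoid α] {s : ℕ} (F : Fin s × Fin s → α) :
    ∏ q ∈ pairs s, F q = ∏ i : Fin s, ∏ j ∈ Finset.Ioi i, F (i, j) := by
  rw [show (∏ i : Fin s, ∏ j ∈ Finset.Ioi i, F (i, j))
      = ∏ x ∈ Finset.univ.sigma (fun i : Fin s => Finset.Ioi i), F (x.1, x.2) from
    Eq.symm (Finset.prod_sigma Finset.univ (fun i : Fin s => Finset.Ioi i)
      (fun x : Σ _ : Fin s, Fin s => F (x.1, x.2)))]
  apply Finset.prod_nbij' (i := fun (q : Fin s × Fin s) => (⟨q.1, q.2⟩ : Σ _ : Fin s, Fin s))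
    (j := fun (x : Σ _ : Fin s, Fin s) => (x.1, x.2))
  · intro q hq
    rw [Finset.mem_sigma]
    exact ⟨Finset.mem_univ _, Finset.mem_Ioi.2 ((mem_pairs q).1 hq)⟩
  · intro x hx
    rw [Finset.mem_sigma, Finset.mem_Ioi] at hx
    exact (mem_pairs _).2 hx.2
  · intro q _; rfl
  · intro x _; rfl
  · intro q _; rfl

noncomputable def epoly (a b : ℕ) : Polynomial ℤ :=
  Polynomial.X ^ a * ∑ i ∈ Finset.range (b - a), Polynomial.X ^ i

lemma epoly_fact {a b : ℕ} (hab : a < b) :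
    (Polynomial.X : Polynomial ℤ) ^ b - Polynomial.X ^ a = (Polynomial.X - 1) * epoly a b := by
  rw [epoly]
  have h := geom_sum_mul (Polynomial.X : Polynomial ℤ) (b - a)
  have h2 : ((Polynomial.X : Polynomial ℤ) - 1) * (Polynomial.X ^ a * ∑ i ∈ Finset.range (b - a), Polynomial.X ^ i)
      = Polynomial.X ^ a * ((∑ i ∈ Finset.range (b - a), Polynomial.X ^ i) * (Polynomial.X - 1)) := by
    ring
  have h3 : a + (b - a) = b := by omega
  rw [h2, h, mul_sub, mul_one, ← pow_add, h3]

lemma epoly_eval_one (a b : ℕ) : (epoly a b).eval 1 = ((b - a : ℕ) : ℤ) := by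
  rw [epoly, Polynomial.eval_mul, Polynomial.eval_pow, Polynomial.eval_X, one_pow, one_mul,
    Polynomial.eval_finset_sum]
  simp

lemma aeval_pow_eval_one {s : ℕ} (v : Fin s → ℕ) (Q : MvPolynomial (Fin s) ℤ) :
    Polynomial.eval 1 (MvPolynomial.aeval (fun i => (Polynomial.X : Polynomial ℤ) ^ (v i)) Q)
      = MvPolynomial.aeval (fun _ : Fin s => (1:ℤ)) Q := by
  have hcomp : ((Polynomial.aeval (1:ℤ) : Polynomial ℤ →ₐ[ℤ] ℤ).comp
      (MvPolynomial.aeval (fun i => (Polynomial.X : Polynomial ℤ) ^ (v i))))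
      = MvPolynomial.aeval (fun _ : Fin s => (1:ℤ)) :=
    MvPolynomial.algHom_ext (fun i => by simp)
  have h2 := congrArg (fun φ : MvPolynomial (Fin s) ℤ →ₐ[ℤ] ℤ => φ Q) hcomp
  simp only [AlgHom.comp_apply] at h2
  rw [← h2, Polynomial.coe_aeval_eq_eval]

theorem cheb_det (p : ℕ) (hp : p.Prime) {ω : ℂ} (hω : IsPrimitiveRoot ω p) {s : ℕ}
    (a n : Fin s → ℕ) (ha : StrictMono a) (hap : ∀ i, a i < p) (hn : StrictMono n)
    (hnp : ∀ j, n j < p) :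
    (Matrix.of fun i j : Fin s => ω ^ (a i * n j)).det ≠ 0 := by
  classical
  haveI : Fact p.Prime := ⟨hp⟩
  intro hD
  set M : Matrix (Fin s) (Fin s) (MvPolynomial (Fin s) ℤ) :=
    Matrix.of (fun i j => (MvPolynomial.X i : MvPolynomial (Fin s) ℤ) ^ (n j)) with hMdef
  -- divisibility by the Vandermonde product
  have hsub : ∀ q ∈ pairs s, subst q.2 q.1 M.det = 0 := by
    intro q hq
    have hqlt := (mem_pairs q).1 hq
    rw [AlgHom.map_det]
    apply Matrix.det_zero_of_row_eq (ne_of_gt hqlt)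
    funext j
    simp only [AlgHom.mapMatrix_apply, Matrix.map_apply, hMdef, Matrix.of_apply, map_pow]
    rw [subst_X_self, subst_X_other _ _ _ (ne_of_lt hqlt)]
  obtain ⟨Q, hPQ⟩ := prod_dvd (pairs s) (fun q hq => (mem_pairs q).1 hq) M.det hsub
  -- evaluation at ω-powers
  have hevP : (MvPolynomial.aeval (fun i : Fin s => ω ^ (a i)) : MvPolynomial (Fin s) ℤ →ₐ[ℤ] ℂ) M.det
      = (Matrix.of fun i j : Fin s => ω ^ (a i * n j)).det := by
    rw [AlgHom.map_det]
    congr 1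
    funext i j
    simp only [AlgHom.mapMatrix_apply, Matrix.map_apply, hMdef, Matrix.of_apply, map_pow,
      MvPolynomial.aeval_X, ← pow_mul]
  have hVne : (MvPolynomial.aeval (fun i : Fin s => ω ^ (a i)) : MvPolynomial (Fin s) ℤ →ₐ[ℤ] ℂ)
      (∏ q ∈ pairs s, (MvPolynomial.X q.2 - MvPolynomial.X q.1)) ≠ 0 := by
    rw [map_prod]
    apply Finset.prod_ne_zero_iff.2
    intro q hq
    rw [map_sub, MvPolynomial.aeval_X, MvPolynomial.aeval_X]
    apply sub_ne_zero.2
    intro hh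
    have := hω.pow_inj (hap q.2) (hap q.1) hh
    have h5 := ha.injective this
    have hqlt2 := (mem_pairs q).1 hq
    rw [h5] at hqlt2
    exact lt_irrefl _ hqlt2
  have hQ0 : (MvPolynomial.aeval (fun i : Fin s => ω ^ (a i)) : MvPolynomial (Fin s) ℤ →ₐ[ℤ] ℂ) Q = 0 := by
    have := congrArg (MvPolynomial.aeval (fun i : Fin s => ω ^ (a i)) : MvPolynomial (Fin s) ℤ →ₐ[ℤ] ℂ) hPQ
    rw [map_mul, hevP, hD] at this
    exact (mul_eq_zero.1 this.symm).resolve_left hVne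
  -- transfer to one-variable polynomial
  set U : Polynomial ℤ := MvPolynomial.aeval (fun i => (Polynomial.X : Polynomial ℤ) ^ (a i)) Q
    with hUdef
  have hUω : Polynomial.aeval ω U = 0 := by
    have hcomp : ((Polynomial.aeval ω : Polynomial ℤ →ₐ[ℤ] ℂ).comp
        (MvPolynomial.aeval (fun i => (Polynomial.X : Polynomial ℤ) ^ (a i))))
        = MvPolynomial.aeval (fun i : Fin s => ω ^ (a i)) :=
      MvPolynomial.algHom_ext (fun i => by simp)
    have h2 := congrArg (fun φ : MvPolynomial (Fin s) ℤ →ₐ[ℤ] ℂ => φ Q) hcomp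
    simp only [AlgHom.comp_apply] at h2
    rw [hUdef, h2, hQ0]
  have hdvdU : (p:ℤ) ∣ U.eval 1 := by
    have hmin : Polynomial.cyclotomic p ℤ ∣ U := by
      rw [Polynomial.cyclotomic_eq_minpoly hω hp.pos]
      exact minpoly.isIntegrallyClosed_dvd (hω.isIntegral hp.pos) hUω
    obtain ⟨W, hW⟩ := hmin
    exact ⟨W.eval 1, by rw [hW, Polynomial.eval_mul, Polynomial.eval_one_cyclotomic_prime]⟩
  have hdvdQ1 : (p:ℤ) ∣ MvPolynomial.aeval (fun _ : Fin s => (1:ℤ)) Q := by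
    rw [← aeval_pow_eval_one a Q]
    exact hdvdU
  -- the z-powers identity
  have hevz := congrArg (MvPolynomial.aeval (fun i : Fin s => (Polynomial.X : Polynomial ℤ) ^ (i : ℕ))) hPQ
  rw [map_mul, AlgHom.map_det] at hevz
  have hdetz : ((MvPolynomial.aeval (fun i : Fin s => (Polynomial.X : Polynomial ℤ) ^ (i : ℕ))).mapMatrix M).det
      = ∏ q ∈ pairs s, ((Polynomial.X : Polynomial ℤ) ^ (n q.2) - Polynomial.X ^ (n q.1)) := by
    have hMz : ((MvPolynomial.aeval (fun i : Fin s => (Polynomial.X : Polynomial ℤ) ^ (i : ℕ))).mapMatrix M)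
        = (Matrix.vandermonde (fun j : Fin s => (Polynomial.X : Polynomial ℤ) ^ (n j))).transpose := by
      funext i j
      simp only [AlgHom.mapMatrix_apply, Matrix.map_apply, hMdef, Matrix.of_apply, map_pow,
        MvPolynomial.aeval_X, Matrix.transpose_apply, Matrix.vandermonde]
      rw [← pow_mul, ← pow_mul, mul_comm]
    rw [hMz, Matrix.det_transpose, Matrix.det_vandermonde, prod_pairs_eq]
  rw [hdetz, map_prod] at hevz
  have hVz : (∏ q ∈ pairs s, (MvPolynomial.aeval (fun i : Fin s => (Polynomial.X : Polynomial ℤ) ^ (i : ℕ)) :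
        MvPolynomial (Fin s) ℤ →ₐ[ℤ] Polynomial ℤ)
      (MvPolynomial.X q.2 - MvPolynomial.X q.1))
      = ∏ q ∈ pairs s, ((Polynomial.X : Polynomial ℤ) ^ ((q.2 : ℕ)) - Polynomial.X ^ ((q.1 : ℕ))) := by
    apply Finset.prod_congr rfl
    intro q _
    rw [map_sub, MvPolynomial.aeval_X, MvPolynomial.aeval_X]
  rw [hVz] at hevz
  -- factor out (X-1)^card
  have hfac1 : ∏ q ∈ pairs s, ((Polynomial.X : Polynomial ℤ) ^ (n q.2) - Polynomial.X ^ (n q.1))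
      = (Polynomial.X - 1) ^ (pairs s).card * ∏ q ∈ pairs s, epoly (n q.1) (n q.2) := by
    rw [← Finset.prod_const, ← Finset.prod_mul_distrib]
    apply Finset.prod_congr rfl
    intro q hq
    exact epoly_fact (hn ((mem_pairs q).1 hq))
  have hfac2 : ∏ q ∈ pairs s, ((Polynomial.X : Polynomial ℤ) ^ ((q.2:ℕ)) - Polynomial.X ^ ((q.1:ℕ)))
      = (Polynomial.X - 1) ^ (pairs s).card * ∏ q ∈ pairs s, epoly (q.1 : ℕ) (q.2 : ℕ) := by
    rw [← Finset.prod_const, ← Finset.prod_mul_distrib]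
    apply Finset.prod_congr rfl
    intro q hq
    exact epoly_fact ((mem_pairs q).1 hq)
  rw [hfac1, hfac2, mul_assoc] at hevz
  have hXne : ((Polynomial.X - 1 : Polynomial ℤ)) ^ (pairs s).card ≠ 0 := by
    apply pow_ne_zero
    intro hh
    have := Polynomial.natDegree_X_sub_C (1:ℤ)
    rw [Polynomial.C_1] at this
    rw [hh] at this
    simp at this
  have hid := mul_left_cancel₀ hXne hevz
  -- evaluate at 1
  have hid1 := congrArg (Polynomial.eval 1) hid
  rw [Polynomial.eval_mul, Polynomial.eval_prod, Polynomial.eval_prod] at hid1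
  simp only [epoly_eval_one] at hid1
  rw [aeval_pow_eval_one] at hid1
  -- p divides LHS
  have hpdvd : (p:ℤ) ∣ ∏ q ∈ pairs s, ((n q.2 - n q.1 : ℕ) : ℤ) := by
    rw [hid1]
    exact Dvd.dvd.mul_left hdvdQ1 _
  have hpZ : Prime (p:ℤ) := Int.prime_iff_natAbs_prime.2 (by simpa using hp)
  obtain ⟨q, hqmem, hqdvd⟩ := hpZ.exists_mem_finset_dvd hpdvd
  have hqlt := (mem_pairs q).1 hqmem
  have h6 : 0 < n q.2 - n q.1 := Nat.sub_pos_of_lt (hn hqlt)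
  have h7 : n q.2 - n q.1 < p := by
    have := hnp q.2
    omega
  have h8 := Int.le_of_dvd (by exact_mod_cast h6) hqdvd
  have : (p:ℤ) ≤ ((n q.2 - n q.1 : ℕ) : ℤ) := h8
  omega
end Cheb2

section glue
variable (d : ℕ) [NeZero d]

lemma val_injective : Function.Injective (ZMod.val : ZMod d → ℕ) := by
  intro a b h
  have ha := ZMod.natCast_rightInverse (n := d) a
  have hb := ZMod.natCast_rightInverse (n := d) b
  rw [← ha, ← hb, h]

lemma f_eq_zero_of_dft (f : ZMod d → ℂ) (h : ∀ l, dft d f l = 0) : f = 0 := by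
  have h2 := eq_of_dft_eq d f (fun _ => 0) (fun l => by rw [h l]; simp [dft])
  funext j
  exact congrFun h2 j

lemma chi_run (t l : ZMod d) (r : ℕ) :
    chi d ((t + (r : ZMod d)) * l) = (zeta d ^ l.val) ^ (t.val + r) := by
  have ht := ZMod.natCast_rightInverse (n := d) t
  have hl := ZMod.natCast_rightInverse (n := d) l
  have h1 : (t + (r : ZMod d)) * l = (((t.val + r) * l.val : ℕ) : ZMod d) := by
    push_cast
    rw [ht, hl]
  rw [h1, chi_natCast, mul_comm (t.val + r), pow_mul]

lemma support_card_le {g : ZMod d → ℂ} {k : ℕ} (Z : Finset (ZMod d)) (hcard : k ≤ Z.card)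
    (hzero : ∀ x ∈ Z, g x = 0) :
    (Finset.univ.filter (fun x => g x ≠ 0)).card ≤ d - k := by
  classical
  have hsub : Z ⊆ Finset.univ.filter (fun x => g x = 0) :=
    fun x hx => Finset.mem_filter.2 ⟨Finset.mem_univ _, hzero x hx⟩
  have h1 := Finset.card_le_card hsub
  have h2 : (Finset.univ.filter (fun x => g x = 0)).card
      + (Finset.univ.filter (fun x => ¬ (g x = 0))).card = d := by
    rw [Finset.card_filter_add_card_filter_not, Finset.card_univ, ZMod.card]
  have h3 : (Finset.univ.filter (fun x : ZMod d => g x ≠ 0)).card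
      = (Finset.univ.filter (fun x => ¬ (g x = 0))).card := rfl
  omega

lemma spectrum_card_of_run {m : ℕ} (f : ZMod d → ℂ) (hf : f ≠ 0) (t : ZMod d)
    (hrun : ∀ r : ℕ, r < m → f (t + (r : ZMod d)) = 0) :
    m + 1 ≤ (Finset.univ.filter (fun l => dft d f l ≠ 0)).card := by
  classical
  by_contra hlt
  push_neg at hlt
  set T := Finset.univ.filter (fun l => dft d f l ≠ 0) with hTdef
  set s := T.card with hsdef
  have hsm : s ≤ m := by omega
  set e : Fin s ≃ {x // x ∈ T} := T.equivFin.symm with hedef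
  set y : Fin s → ℂ := fun i => (starRingEnd ℂ) (zeta d ^ ((e i : ZMod d)).val) with hydef
  have hzne : zeta d ≠ 0 := by rw [zeta]; exact Complex.exp_ne_zero _
  have hyinj : Function.Injective y := by
    intro i j hij
    apply e.injective
    apply Subtype.ext
    apply val_injective d
    apply (zeta_prim d).pow_inj (ZMod.val_lt _) (ZMod.val_lt _)
    have := congrArg (starRingEnd ℂ) hij
    simpa [hydef] using this
  have hy0 : ∀ j, y j ≠ 0 := by
    intro j hh
    exact pow_ne_zero _ hzne ((map_eq_zero (starRingEnd ℂ)).1 hh)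
  have hcond : ∀ i : Fin s,
      ∑ j, (Matrix.of fun i j : Fin s => y j ^ (t.val + (i:ℕ))) i j * dft d f (e j : ZMod d) = 0 := by
    intro i
    have hz := hrun (i : ℕ) (lt_of_lt_of_le i.2 hsm)
    have hinv := dft_inversion d f (t + ((i : ℕ) : ZMod d))
    rw [hz, mul_zero] at hinv
    have hres : ∑ l ∈ T, dft d f l * (starRingEnd ℂ) (chi d ((t + ((i:ℕ) : ZMod d)) * l))
        = ∑ l : ZMod d, dft d f l * (starRingEnd ℂ) (chi d ((t + ((i:ℕ) : ZMod d)) * l)) := by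
      apply Finset.sum_subset (Finset.subset_univ T)
      intro x _ hx
      have : ¬ (dft d f x ≠ 0) := fun hh => hx (Finset.mem_filter.2 ⟨Finset.mem_univ _, hh⟩)
      rw [not_not.1 this, zero_mul]
    have hsub : ∑ l ∈ T, dft d f l * (starRingEnd ℂ) (chi d ((t + ((i:ℕ) : ZMod d)) * l)) = 0 := by
      rw [hres, hinv]
    rw [← Finset.sum_coe_sort T
      (fun l => dft d f l * (starRingEnd ℂ) (chi d ((t + ((i:ℕ) : ZMod d)) * l)))] at hsub
    rw [← Equiv.sum_comp e
      (fun x : {x // x ∈ T} => dft d f x * (starRingEnd ℂ) (chi d ((t + ((i:ℕ) : ZMod d)) * x)))] at hsub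
    rw [← hsub]
    apply Finset.sum_congr rfl
    intro j _
    rw [Matrix.of_apply, chi_run, map_pow]
    ring
  have hdet := det_shift_vand y hyinj hy0 t.val
  have hc0 := vec_zero_of_det _ hdet _ hcond
  have hall : ∀ l, dft d f l = 0 := by
    intro l
    by_cases hl : l ∈ T
    · have h5 := hc0 (e.symm ⟨l, hl⟩)
      rw [Equiv.apply_symm_apply] at h5
      exact h5
    · have : ¬ (dft d f l ≠ 0) := fun hh => hl (Finset.mem_filter.2 ⟨Finset.mem_univ _, hh⟩)
      exact not_not.1 this
  exact hf (f_eq_zero_of_dft d f hall)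

lemma tao_contra {m : ℕ} (hp : d.Prime) (f : ZMod d → ℂ) (hf : f ≠ 0)
    (hS : (Finset.univ.filter (fun j => f j ≠ 0)).card ≤ d - 2*m)
    (hT : (Finset.univ.filter (fun l => dft d f l ≠ 0)).card ≤ d - 2*m)
    (hd4 : d ≤ 4*m) (hge : 3*m + 1 ≤ d) : False := by
  classical
  set S := Finset.univ.filter (fun j => f j ≠ 0) with hSdef
  set s := S.card with hsdef
  -- zero set of dft
  set Zc := Finset.univ.filter (fun l => dft d f l = 0) with hZcdef
  have hZcT : Zc.card + (Finset.univ.filter (fun l => dft d f l ≠ 0)).card = d := by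
    rw [hZcdef, Finset.card_filter_add_card_filter_not, Finset.card_univ, ZMod.card]
  have hsle : s ≤ Zc.card := by omega
  obtain ⟨A, hAsub, hAcard⟩ := Finset.exists_subset_card_eq hsle
  -- sorted enumerations
  have hSim0 : (S.image ZMod.val).card = s :=
    (Finset.card_image_of_injective S (val_injective d)).trans rfl
  have hAim0 : (A.image ZMod.val).card = s :=
    (Finset.card_image_of_injective A (val_injective d)).trans hAcard
  set oiS := (S.image ZMod.val).orderIsoOfFin hSim0 with hoiS
  set oiA := (A.image ZMod.val).orderIsoOfFin hAim0 with hoiA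
  set n : Fin s → ℕ := fun j => (oiS j : ℕ) with hndef
  set a : Fin s → ℕ := fun i => (oiA i : ℕ) with hadef
  have hnmono : StrictMono n := fun i j hij => Subtype.coe_lt_coe.2 (oiS.lt_iff_lt.2 hij)
  have hamono : StrictMono a := fun i j hij => Subtype.coe_lt_coe.2 (oiA.lt_iff_lt.2 hij)
  have hnp : ∀ j, n j < d := by
    intro j
    have hmem := (oiS j).2
    obtain ⟨x, -, hx2⟩ := Finset.mem_image.1 hmem
    simp only [hndef]
    rw [← hx2]
    exact ZMod.val_lt x
  have hap : ∀ i, a i < d := by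
    intro i
    have hmem := (oiA i).2
    obtain ⟨x, -, hx2⟩ := Finset.mem_image.1 hmem
    simp only [hadef]
    rw [← hx2]
    exact ZMod.val_lt x
  set νel : Fin s → ZMod d := fun j => ((n j : ℕ) : ZMod d) with hνdef
  set αel : Fin s → ZMod d := fun i => ((a i : ℕ) : ZMod d) with hαdef
  have hνval : ∀ j, (νel j).val = n j := fun j => ZMod.val_cast_of_lt (hnp j)
  have hαval : ∀ i, (αel i).val = a i := fun i => ZMod.val_cast_of_lt (hap i)
  have hνS : ∀ j, νel j ∈ S := by
    intro j
    obtain ⟨x, hx1, hx2⟩ := Finset.mem_image.1 (oiS j).2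
    have : νel j = x := by
      simp only [hνdef, hndef]
      rw [← hx2]
      exact ZMod.natCast_rightInverse x
    rwa [this]
  have hαA : ∀ i, αel i ∈ A := by
    intro i
    obtain ⟨x, hx1, hx2⟩ := Finset.mem_image.1 (oiA i).2
    have : αel i = x := by
      simp only [hαdef, hadef]
      rw [← hx2]
      exact ZMod.natCast_rightInverse x
    rwa [this]
  have hνinj : Function.Injective νel := by
    intro i j h
    apply hnmono.injective
    rw [← hνval i, ← hνval j, h]
  have hSim : S = Finset.image νel Finset.univ := by
    apply Finset.eq_of_subset_of_card_le
    · intro x hx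
      have hxv : x.val ∈ S.image ZMod.val := Finset.mem_image.2 ⟨x, hx, rfl⟩
      set j := oiS.symm ⟨x.val, hxv⟩ with hjdef
      have hnj : n j = x.val := by
        simp only [hndef, hjdef]
        rw [OrderIso.apply_symm_apply]
      apply Finset.mem_image.2
      refine ⟨j, Finset.mem_univ _, ?_⟩
      simp only [hνdef]
      rw [hnj]
      exact ZMod.natCast_rightInverse x
    · rw [Finset.card_image_of_injective _ hνinj, Finset.card_univ, Fintype.card_fin]
  have hcond : ∀ i : Fin s,
      ∑ j, (Matrix.of fun i j : Fin s => zeta d ^ (a i * n j)) i j * f (νel j) = 0 := by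
    intro i
    have hαZc : αel i ∈ Zc := hAsub (hαA i)
    have hα0 : dft d f (αel i) = 0 := (Finset.mem_filter.1 hαZc).2
    rw [dft] at hα0
    have hres : ∑ j ∈ S, f j * chi d (j * αel i) = ∑ j : ZMod d, f j * chi d (j * αel i) := by
      apply Finset.sum_subset (Finset.subset_univ S)
      intro x _ hx
      have : ¬ (f x ≠ 0) := fun hh => hx (Finset.mem_filter.2 ⟨Finset.mem_univ _, hh⟩)
      rw [not_not.1 this, zero_mul]
    have hsum : ∑ j ∈ S, f j * chi d (j * αel i) = 0 := by rw [hres, hα0]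
    rw [hSim, Finset.sum_image (fun x _ y _ h => hνinj h)] at hsum
    rw [← hsum]
    apply Finset.sum_congr rfl
    intro j _
    rw [Matrix.of_apply]
    have hchi : chi d (νel j * αel i) = zeta d ^ (a i * n j) := by
      rw [chi_eq_zeta_pow, ZMod.val_mul, zeta_pow_mod, hνval, hαval, mul_comm (n j) (a i)]
    rw [hchi]
    ring
  have hdet := Cheb2.cheb_det d hp (zeta_prim d) a n hamono hap hnmono hnp
  have hc0 := vec_zero_of_det _ hdet _ hcond
  -- contradiction with f ≠ 0
  obtain ⟨p₀, hp₀⟩ : ∃ p, f p ≠ 0 := Function.ne_iff.1 hf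
  have hp₀S : p₀ ∈ S := Finset.mem_filter.2 ⟨Finset.mem_univ _, hp₀⟩
  rw [hSim] at hp₀S
  obtain ⟨j, -, hj⟩ := Finset.mem_image.1 hp₀S
  exact hp₀ (hj ▸ hc0 j)

end glue

theorem stmt16 (d m : ℕ) [NeZero d] (hd : 2 ≤ d)
    (hm : if d.Prime then d - 1 < 4 * m else d - 1 < 3 * m)
    (f f' : ZMod d → ℂ)
    (hsamp : ∀ k l : ZMod d,
      ((∃ a : ℤ, |a| ≤ (m : ℤ) ∧ k = (a : ZMod d)) ∨
       (∃ a : ℤ, |a| ≤ (m : ℤ) ∧ l = (a : ZMod d))) →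
      stft d f' f' k l = stft d f f k l) :
    ∃ γ : ℂ, ‖γ‖ = 1 ∧ f' = fun j => γ * f j := by
  classical
  have hm1 : 1 ≤ m := by
    by_cases hdp : d.Prime
    · rw [if_pos hdp] at hm; omega
    · rw [if_neg hdp] at hm; omega
  have hd4 : d ≤ 4 * m := by
    by_cases hdp : d.Prime
    · rw [if_pos hdp] at hm; omega
    · rw [if_neg hdp] at hm; omega
  -- time-side products
  have hPt : Pprop d m f f' := by
    intro c hc p
    have h := fun l => hsamp ((c : ZMod d)) l (Or.inl ⟨c, hc, rfl⟩)
    have h2 := eq_of_dft_eq d (fun j => f' j * (starRingEnd ℂ) (f' (j - (c : ZMod d))))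
      (fun j => f j * (starRingEnd ℂ) (f (j - (c : ZMod d))))
      (fun l => by rw [← stft_eq_dft, ← stft_eq_dft]; exact h l)
    exact congrFun h2 p
  -- frequency-side products
  have hPf : Pprop d m (dft d f) (dft d f') := by
    intro c hc p
    have h := fun k => hsamp k ((c : ZMod d)) (Or.inr ⟨c, hc, rfl⟩)
    have h2 : ∀ b : ZMod d, dft d f' ((c : ZMod d) + b) * (starRingEnd ℂ) (dft d f' b)
        = dft d f ((c : ZMod d) + b) * (starRingEnd ℂ) (dft d f b) := by
      intro b
      rw [← stft_freq, ← stft_freq]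
      exact Finset.sum_congr rfl (fun k _ => by rw [h k])
    have h3 := h2 (p - (c : ZMod d))
    have h4 : (c : ZMod d) + (p - (c : ZMod d)) = p := by ring
    rwa [h4] at h3
  by_cases hf0 : f = 0
  · refine ⟨1, by simp, ?_⟩
    funext p
    have : f' p = 0 := (pprop_zero_iff hPt p).2 (by rw [hf0]; rfl)
    rw [this, hf0]
    simp
  by_cases hR1 : Recov d m f
  · exact rec_recover hPt hR1
  by_cases hR2 : Recov d m (dft d f)
  · obtain ⟨γ, hγ, hEq⟩ := rec_recover hPf hR2
    refine ⟨γ, hγ, ?_⟩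
    apply eq_of_dft_eq d
    intro l
    rw [dft_smul]
    exact congrFun hEq l
  -- contradiction case
  exfalso
  have hfhat0 : dft d f ≠ 0 := by
    intro hh
    exact hf0 (f_eq_zero_of_dft d f (fun l => by rw [congrFun hh l]; rfl))
  obtain ⟨t, hrun⟩ := run_of_not_rec hf0 hR1
  have hspec := spectrum_card_of_run d f hf0 t hrun
  obtain ⟨Z2, hZ2card, hZ2zero⟩ := zeros_of_not_rec hm1 hfhat0 hR2
  have hThat : (Finset.univ.filter (fun l => dft d f l ≠ 0)).card ≤ d - 2*m :=
    support_card_le d Z2 hZ2card hZ2zero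
  by_cases hdp : d.Prime
  · -- prime case: Chebotarev / Tao
    obtain ⟨Z1, hZ1card, hZ1zero⟩ := zeros_of_not_rec hm1 hf0 hR1
    have hScard : (Finset.univ.filter (fun j => f j ≠ 0)).card ≤ d - 2*m :=
      support_card_le d Z1 hZ1card hZ1zero
    have hge : 3*m + 1 ≤ d := by omega
    exact tao_contra d hdp f hf0 hScard hThat hd4 hge
  · -- non-prime case: counting
    rw [if_neg hdp] at hm
    omega
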